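/- Let G be a nontrivial totally ordered abelian group and a > 0 in G. The conductive monoid M_a = {0} ∪ {g ∈ G : g ≥ a} is a finite factorization monoid if and only if G is cyclic (infinite cyclic). -/

import Mathlib

/-- `x` is invertible within the subset `S` of the ambient monoid. -/
def SUnit {A : Type*} [AddCommMonoid A] (S : Set A) (x : A) : Prop := ∃ y ∈ S, x + y = 0

/-- `a` is an atom of the subset (submonoid) `S`: it is non-invertible in `S` and
cannot be written as a sum of two non-invertible elements of `S`. -/
def SAtom {A : Type*} [AddCommMonoid A] (S : Set A) (a : A) : Prop :=
  a ∈ S ∧ ¬ SUnit S a ∧ ∀ b ∈ S, ∀ c ∈ S, a = b + c → SUnit S b ∨ SUnit S c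

/-- `x` is an atomic element of `S`: invertible in `S` or a finite sum of atoms of `S`. -/
def SAtomicElem {A : Type*} [AddCommMonoid A] (S : Set A) (x : A) : Prop :=
  SUnit S x ∨ ∃ l : Multiset A, (∀ a ∈ l, SAtom S a) ∧ l.sum = x

/-- The subset (submonoid) `S` is atomic. -/
def SAtomic {A : Type*} [AddCommMonoid A] (S : Set A) : Prop :=
  ∀ x ∈ S, SAtomicElem S x

section Aux
variable {G : Type*} [AddCommGroup G] [LinearOrder G] [IsOrderedAddMonoid G] {a : G}

lemma mem_conductive_iff (x : G) : x ∈ ({0} ∪ Set.Ici a : Set G) ↔ x = 0 ∨ a ≤ x := by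
  simp [Set.mem_union, Set.mem_Ici]

lemma sunit_zero : SUnit ({0} ∪ Set.Ici a : Set G) 0 := ⟨0, Or.inl rfl, add_zero 0⟩

lemma not_sunit_of_pos (ha : 0 < a) {x : G} (hx : 0 < x) :
    ¬ SUnit ({0} ∪ Set.Ici a : Set G) x := by
  rintro ⟨y, hy, hxy⟩
  have hy0 : 0 ≤ y := by
    rcases (mem_conductive_iff y).1 hy with rfl | h
    · exact le_refl 0
    · exact le_of_lt (lt_of_lt_of_le ha h)
  have : 0 < x + y := add_pos_of_pos_of_nonneg hx hy0
  rw [hxy] at this; exact lt_irrefl 0 this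

lemma satom_iff (ha : 0 < a) (t : G) :
    SAtom ({0} ∪ Set.Ici a : Set G) t ↔ a ≤ t ∧ t < a + a := by
  constructor
  · rintro ⟨htS, htu, hdec⟩
    have hat : a ≤ t := by
      rcases (mem_conductive_iff t).1 htS with rfl | h
      · exact absurd sunit_zero htu
      · exact h
    refine ⟨hat, ?_⟩
    by_contra h2
    push_neg at h2
    have h1 : (a : G) ∈ ({0} ∪ Set.Ici a : Set G) := Or.inr (le_refl a)
    have h3 : (t - a) ∈ ({0} ∪ Set.Ici a : Set G) := Or.inr (le_sub_iff_add_le.2 h2)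
    rcases hdec a h1 (t - a) h3 (by abel) with hu | hu
    · exact not_sunit_of_pos ha ha hu
    · have hat' : a < t := lt_of_lt_of_le (lt_add_of_pos_right a ha) h2
      exact not_sunit_of_pos ha (sub_pos.2 hat') hu
  · rintro ⟨h1, h2⟩
    refine ⟨Or.inr h1, not_sunit_of_pos ha (lt_of_lt_of_le ha h1), ?_⟩
    intro b hb c hc heq
    rcases (mem_conductive_iff b).1 hb with rfl | hab
    · exact Or.inl sunit_zero
    rcases (mem_conductive_iff c).1 hc with rfl | hac
    · exact Or.inr sunit_zero
    exfalso
    have : a + a ≤ t := heq ▸ add_le_add hab hac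
    exact lt_irrefl _ (lt_of_lt_of_le h2 this)

end Aux

section Fwd
variable {G : Type*} [AddCommGroup G] [LinearOrder G] [IsOrderedAddMonoid G]

lemma forward_dir (a : G) (ha : 0 < a)
    (hat : SAtomic ({0} ∪ Set.Ici a : Set G))
    (hfin : ∀ x ∈ ({0} ∪ Set.Ici a : Set G),
        {l : Multiset G | (∀ b ∈ l, SAtom ({0} ∪ Set.Ici a : Set G) b) ∧
          l.sum = x}.Finite) :
    ∃ b : G, ∀ g : G, ∃ n : ℤ, g = n • b := by
  have h3S : a + a + a ∈ ({0} ∪ Set.Ici a : Set G) :=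
    Or.inr (le_add_of_nonneg_left (by positivity))
  -- the open interval (a, 2a) is finite
  have hIoo : (Set.Ioo a (a + a)).Finite := by
    apply Set.Finite.subset
      (Set.Finite.biUnion (hfin _ h3S) (fun l _ => l.finite_toSet))
    intro t ht
    obtain ⟨ht1, ht2⟩ := ht
    have hmem : ({t, a + a + a - t} : Multiset G) ∈
        {l : Multiset G | (∀ b ∈ l, SAtom ({0} ∪ Set.Ici a : Set G) b) ∧
          l.sum = a + a + a} := by
      constructor
      · intro b hb
        rcases Multiset.mem_cons.1 hb with rfl | hb
        · exact (satom_iff ha b).2 ⟨le_of_lt ht1, ht2⟩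
        · rw [Multiset.mem_singleton] at hb
          subst hb
          refine (satom_iff ha _).2 ⟨?_, ?_⟩
          · rw [le_sub_iff_add_le]
            calc a + t ≤ a + (a + a) := le_of_lt ((add_lt_add_iff_left a).2 ht2)
              _ = a + a + a := by abel
          · rw [sub_lt_iff_lt_add]
            calc a + a + a < a + a + t := by exact (add_lt_add_iff_left _).2 ht1
              _ = a + a + (t + a) - a := by abel
              _ = _ := by abel
      · simp [Multiset.sum_cons, Multiset.sum_singleton]
    exact Set.mem_biUnion hmem (by simp)
  -- (0, a) finite, hence (0, a] finite
  have hI0 : (Set.Ioo (0:G) a).Finite := by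
    have heq : Set.Ioo (0:G) a = (fun t => a + t) ⁻¹' Set.Ioo a (a + a) := by
      ext t
      simp only [Set.mem_Ioo, Set.mem_preimage]
      constructor
      · rintro ⟨h1, h2⟩; exact ⟨lt_add_of_pos_right a h1, (add_lt_add_iff_left a).2 h2⟩
      · rintro ⟨h1, h2⟩; exact ⟨pos_of_lt_add_right h1, lt_of_add_lt_add_left h2⟩
    rw [heq]
    exact Set.Finite.preimage (Set.injOn_of_injective (add_right_injective a)) hIoo
  have hIoc : (Set.Ioc (0:G) a).Finite := by
    have : Set.Ioc (0:G) a ⊆ Set.Ioo (0:G) a ∪ {a} := by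
      intro x ⟨h1, h2⟩
      rcases eq_or_lt_of_le h2 with rfl | h2
      · exact Or.inr rfl
      · exact Or.inl ⟨h1, h2⟩
    exact (hI0.union (Set.finite_singleton a)).subset this
  -- least positive element m
  obtain ⟨m, hm, hmin⟩ := Set.exists_min_image _ id hIoc ⟨a, ha, le_refl a⟩
  obtain ⟨hm0, hma⟩ := hm
  have hleast : ∀ x : G, 0 < x → m ≤ x := by
    intro x hx
    by_cases hxa : x ≤ a
    · exact hmin x ⟨hx, hxa⟩
    · push_neg at hxa
      exact le_of_lt (lt_of_le_of_lt hma hxa)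
  -- every positive element below 2a is a natural multiple of m
  have hmul : ∀ x : G, 0 < x → x < a + a → ∃ n : ℕ, x = n • m := by
    intro x hx hx2
    have hJfin : {j : ℕ | j • m ≤ x}.Finite := by
      have hsub : {j : ℕ | j • m ≤ x} ⊆ (fun j : ℕ => j • m) ⁻¹' Set.Ico (0:G) (a + a) := by
        intro j hj
        simp only [Set.mem_preimage, Set.mem_Ico]
        exact ⟨nsmul_nonneg hm0.le j, lt_of_le_of_lt hj hx2⟩
      refine Set.Finite.subset (Set.Finite.preimage ?_ ?_) hsub
      · exact Set.injOn_of_injective (nsmul_left_strictMono hm0).injective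
      · have hss : Set.Ico (0:G) (a + a) ⊆ (Set.Ioo 0 a ∪ Set.Ioo a (a+a)) ∪ ({0} ∪ {a}) := by
          intro y ⟨h1, h2⟩
          rcases eq_or_lt_of_le h1 with rfl | h1
          · exact Or.inr (Or.inl rfl)
          rcases lt_trichotomy y a with h | rfl | h
          · exact Or.inl (Or.inl ⟨h1, h⟩)
          · exact Or.inr (Or.inr rfl)
          · exact Or.inl (Or.inr ⟨h, h2⟩)
        exact (((hI0.union hIoo).union ((Set.finite_singleton 0).union
          (Set.finite_singleton a))).subset hss)
    obtain ⟨j, hj, hjmax⟩ := Set.exists_max_image _ id hJfin ⟨0, by simpa using hx.le⟩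
    refine ⟨j, ?_⟩
    by_contra hne
    have hlt : j • m < x := lt_of_le_of_ne hj (fun h => hne h.symm)
    have : m ≤ x - j • m := hleast _ (sub_pos.2 hlt)
    have hj1 : (j + 1) • m ≤ x := by
      rw [succ_nsmul]
      calc j • m + m ≤ j • m + (x - j • m) := (add_le_add_iff_left _).2 this
        _ = x := by abel
    have := hjmax (j + 1) hj1
    simp only [id] at this
    omega
  -- conclude
  have hmulZ : ∀ x : G, 0 < x → x < a + a → ∃ n : ℤ, x = n • m := by
    intro x hx hx2
    obtain ⟨n, hn⟩ := hmul x hx hx2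
    exact ⟨(n : ℤ), by rw [hn, natCast_zsmul]⟩
  have hsum : ∀ l : Multiset G, (∀ b ∈ l, ∃ n : ℤ, b = n • m) → ∃ n : ℤ, l.sum = n • m := by
    intro l
    induction l using Multiset.induction with
    | empty => exact fun _ => ⟨0, by simp⟩
    | cons b l ih =>
      intro h
      obtain ⟨n, hn⟩ := h b (Multiset.mem_cons_self b l)
      obtain ⟨k, hk⟩ := ih (fun c hc => h c (Multiset.mem_cons_of_mem hc))
      exact ⟨n + k, by rw [Multiset.sum_cons, hn, hk, add_zsmul]⟩
  have haa : a < a + a := lt_add_of_pos_right a ha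
  obtain ⟨ka, hka⟩ := hmulZ a ha haa
  have hpos : ∀ g : G, 0 < g → ∃ n : ℤ, g = n • m := by
    intro g hg
    have hgaS : g + a ∈ ({0} ∪ Set.Ici a : Set G) := Or.inr (le_add_of_nonneg_left hg.le)
    rcases hat (g + a) hgaS with hu | ⟨l, hl, hls⟩
    · exact absurd hu (not_sunit_of_pos ha (by positivity))
    · obtain ⟨n, hn⟩ := hsum l (fun b hb => by
        obtain ⟨h1, h2⟩ := (satom_iff ha b).1 (hl b hb)
        exact hmulZ b (lt_of_lt_of_le ha h1) h2)
      refine ⟨n - ka, ?_⟩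
      rw [sub_zsmul, ← hka, ← hn, hls]
      abel
  refine ⟨m, fun g => ?_⟩
  rcases lt_trichotomy g 0 with h | rfl | h
  · obtain ⟨n, hn⟩ := hpos (-g) (neg_pos.2 h)
    exact ⟨-n, by rw [neg_zsmul, ← hn, neg_neg]⟩
  · exact ⟨0, by simp⟩
  · exact hpos g h

end Fwd

section Bwd
variable {G : Type*} [AddCommGroup G] [LinearOrder G] [IsOrderedAddMonoid G]

lemma bwd_atomic (a : G) (ha : 0 < a) {c : G} (hc : 0 < c)
    (hgen : ∀ g : G, ∃ n : ℤ, g = n • c) :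
    SAtomic ({0} ∪ Set.Ici a : Set G) := by
  have key : ∀ N : ℕ, ∀ x : G, a ≤ x → x ≤ (N : ℤ) • c →
      ∃ l : Multiset G, (∀ t ∈ l, SAtom ({0} ∪ Set.Ici a : Set G) t) ∧ l.sum = x := by
    intro N
    induction N using Nat.strong_induction_on with
    | _ N ih =>
      intro x hax hxN
      by_cases hx2 : x < a + a
      · refine ⟨{x}, ?_, Multiset.sum_singleton x⟩
        intro t ht
        rw [Multiset.mem_singleton] at ht
        subst ht
        exact (satom_iff ha t).2 ⟨hax, hx2⟩
      · push_neg at hx2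
        obtain ⟨k, hk⟩ := hgen a
        have hk1 : 1 ≤ k := by
          by_contra h
          push_neg at h
          have : k • c ≤ (0:ℤ) • c := zsmul_le_zsmul_left hc.le (by omega)
          rw [zero_zsmul, ← hk] at this
          exact absurd this (not_le.2 ha)
        have hkN : k ≤ (N : ℤ) := by
          have : k • c ≤ (N : ℤ) • c := by
            rw [← hk]; exact le_trans hax hxN
          exact (zsmul_le_zsmul_iff_left hc).1 this
        have hM : N - k.toNat < N := by omega
        have h1 : a ≤ x - a := le_sub_iff_add_le.2 hx2
        have h2 : x - a ≤ ((N - k.toNat : ℕ) : ℤ) • c := by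
          have hcast : ((N - k.toNat : ℕ) : ℤ) • c = (N : ℤ) • c - a := by
            have h' : ((N - k.toNat : ℕ) : ℤ) = (N : ℤ) - k := by omega
            rw [h', sub_zsmul, ← hk]
            exact (sub_eq_add_neg _ _).symm
          rw [hcast]
          exact sub_le_sub_right hxN a
        obtain ⟨l, hl, hls⟩ := ih _ hM (x - a) h1 h2
        refine ⟨a ::ₘ l, ?_, ?_⟩
        · intro t ht
          rcases Multiset.mem_cons.1 ht with rfl | ht
          · exact (satom_iff ha t).2 ⟨le_refl t, lt_add_of_pos_right t ha⟩
          · exact hl t ht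
        · rw [Multiset.sum_cons, hls]; abel
  intro x hx
  rcases (mem_conductive_iff x).1 hx with rfl | hax
  · exact Or.inl sunit_zero
  · obtain ⟨n, hn⟩ := hgen x
    have hn0 : 0 ≤ n := by
      by_contra h
      push_neg at h
      have : n • c ≤ (0:ℤ) • c := zsmul_le_zsmul_left hc.le (by omega)
      rw [zero_zsmul, ← hn] at this
      exact absurd (lt_of_lt_of_le ha hax) (not_lt.2 this)
    refine Or.inr (key n.toNat x hax ?_)
    rw [Int.toNat_of_nonneg hn0, ← hn]

lemma bwd_finite (a : G) (ha : 0 < a) {c : G} (hc : 0 < c)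
    (hgen : ∀ g : G, ∃ n : ℤ, g = n • c) :
    ∀ x ∈ ({0} ∪ Set.Ici a : Set G),
      {l : Multiset G | (∀ b ∈ l, SAtom ({0} ∪ Set.Ici a : Set G) b) ∧
        l.sum = x}.Finite := by
  intro x hx
  have hx0 : 0 ≤ x := by
    rcases (mem_conductive_iff x).1 hx with rfl | h
    · exact le_refl 0
    · exact le_of_lt (lt_of_lt_of_le ha h)
  obtain ⟨n, hn⟩ := hgen x
  have hn0 : 0 ≤ n := by
    by_contra h
    push_neg at h
    have : n • c < (0:ℤ) • c := zsmul_lt_zsmul_left hc h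
    rw [zero_zsmul, ← hn] at this
    exact absurd hx0 (not_le.2 this)
  set N : ℕ := n.toNat with hN
  have hxN : x = (N : ℤ) • c := by rw [hN, Int.toNat_of_nonneg hn0, ← hn]
  set A : Finset G := Finset.image (fun j : ℕ => (j : ℤ) • c) (Finset.range (N + 1)) with hA
  set Mb : Multiset G := N • A.val with hMb
  apply Set.Finite.subset (Multiset.powerset Mb).finite_toSet
  rintro l ⟨hl, hls⟩
  have hca : c ≤ a := by
    obtain ⟨k, hk⟩ := hgen a
    have hk1 : 1 ≤ k := by
      by_contra h
      push_neg at h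
      have : k • c ≤ (0:ℤ) • c := zsmul_le_zsmul_left hc.le (by omega)
      rw [zero_zsmul, ← hk] at this
      exact absurd this (not_le.2 ha)
    calc c = (1 : ℤ) • c := (one_zsmul c).symm
      _ ≤ k • c := zsmul_le_zsmul_left hc.le hk1
      _ = a := hk.symm
  have hlc : ∀ t ∈ l, c ≤ t := fun t ht =>
    le_trans hca ((satom_iff ha t).1 (hl t ht)).1
  have hcard : Multiset.card l ≤ N := by
    have h1 : Multiset.card l • c ≤ l.sum := Multiset.card_nsmul_le_sum hlc
    rw [hls, hxN] at h1
    have h2 : ((Multiset.card l : ℤ)) • c ≤ (N : ℤ) • c := by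
      rwa [natCast_zsmul]
    exact_mod_cast (zsmul_le_zsmul_iff_left hc).1 h2
  show l ∈ Multiset.powerset Mb
  rw [Multiset.mem_powerset, Multiset.le_iff_count]
  intro t
  by_cases htl : t ∈ l
  · have hta := (satom_iff ha t).1 (hl t htl)
    have htx : t ≤ x := by
      rw [← hls]
      refine Multiset.single_le_sum (fun y hy => ?_) t htl
      exact le_of_lt (lt_of_lt_of_le hc (hlc y hy))
    obtain ⟨j, hj⟩ := hgen t
    have hj1 : 1 ≤ j := by
      have htpos : 0 < t := lt_of_lt_of_le ha hta.1
      by_contra h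
      push_neg at h
      have : j • c ≤ (0:ℤ) • c := zsmul_le_zsmul_left hc.le (by omega)
      rw [zero_zsmul, ← hj] at this
      exact absurd htpos (not_lt.2 this)
    have hjN : j ≤ (N : ℤ) := by
      have : j • c ≤ (N : ℤ) • c := by rw [← hj, ← hxN]; exact htx
      exact (zsmul_le_zsmul_iff_left hc).1 this
    have htA : t ∈ A := by
      rw [hA, Finset.mem_image]
      refine ⟨j.toNat, Finset.mem_range.2 (by omega), ?_⟩
      rw [Int.toNat_of_nonneg (by omega), ← hj]
    have hA1 : 1 ≤ Multiset.count t A.val :=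
      Multiset.count_pos.2 (Finset.mem_def.1 htA)
    calc Multiset.count t l ≤ Multiset.card l := Multiset.count_le_card t l
      _ ≤ N := hcard
      _ = N * 1 := (Nat.mul_one N).symm
      _ ≤ N * Multiset.count t A.val := Nat.mul_le_mul_left N hA1
      _ = Multiset.count t Mb := by rw [hMb, Multiset.count_nsmul]
  · rw [Multiset.count_eq_zero_of_notMem htl]
    exact Nat.zero_le _

end Bwd


/-- The conductive positive monoid `M_a = {0} ∪ G_{≥ a}` of a nontrivial totally
ordered abelian group `G` (with `a > 0`) is a finite factorization monoid if and
only if `G` is (infinite) cyclic. -/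
theorem conductive_monoid_ff_iff_cyclic {G : Type*} [AddCommGroup G] [LinearOrder G] [IsOrderedAddMonoid G]
    [Nontrivial G] (a : G) (ha : 0 < a) :
    (SAtomic ({0} ∪ Set.Ici a : Set G) ∧
      ∀ x ∈ ({0} ∪ Set.Ici a : Set G),
        {l : Multiset G | (∀ b ∈ l, SAtom ({0} ∪ Set.Ici a : Set G) b) ∧
          l.sum = x}.Finite) ↔
    ∃ b : G, ∀ g : G, ∃ n : ℤ, g = n • b := by
  constructor
  · rintro ⟨hat, hfin⟩
    exact forward_dir a ha hat hfin
  · rintro ⟨b, hb⟩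
    obtain ⟨c, hc, hgen⟩ : ∃ c : G, 0 < c ∧ ∀ g : G, ∃ n : ℤ, g = n • c := by
      have hbne : b ≠ 0 := by
        rintro rfl
        obtain ⟨x, hx⟩ := exists_ne (0 : G)
        obtain ⟨n, hn⟩ := hb x
        rw [smul_zero] at hn
        exact hx hn
      rcases hbne.lt_or_gt with h | h
      · refine ⟨-b, neg_pos.2 h, fun g => ?_⟩
        obtain ⟨n, hn⟩ := hb g
        exact ⟨-n, by rw [hn, neg_zsmul, zsmul_neg, neg_neg]⟩
      · exact ⟨b, h, hb⟩
    exact ⟨bwd_atomic a ha hc hgen, bwd_finite a ha hc hgen⟩
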